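/- Let A = ℝ[Y][u,v]/(uv − f) be the coordinate ring of the suspension of an affine variety Y along f ∈ ℝ[Y], and let δ₀ be a derivation of ℝ[Y] and q a polynomial with q(0) = 0. Define δ₁ on ℝ[Y][u,v] by δ₁(g) = q(v)·δ₀(g) for g ∈ ℝ[Y], δ₁(v) = 0, δ₁(u) = (q(v)/v)·δ₀(f) (which is a polynomial since q(0)=0). Then δ₁(uv − f) = 0, i.e., δ₁ preserves the ideal (uv − f) and hence descends to a derivation of A; moreover if δ₀ is locally nilpotent then so is the induced derivation on A. -/
import Mathlib

open MvPolynomial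

section Aux

open Finset

variable {A : Type*} [CommRing A] [Algebra ℝ A] (δ : Derivation ℝ A A)

private lemma iter_leibniz (p q : A) (n : ℕ) :
    (⇑δ)^[n] (p * q) =
      ∑ k ∈ range n.succ, (n.choose k • ((⇑δ)^[n - k] p * (⇑δ)^[k] q)) := by
  induction n with
  | zero => simp [Finset.range]
  | succ n IH =>
    calc
      (⇑δ)^[n + 1] (p * q) =
          δ (∑ k ∈ range n.succ,
              n.choose k • ((⇑δ)^[n - k] p * (⇑δ)^[k] q)) := by
        rw [Function.iterate_succ_apply', IH]
      _ = (∑ k ∈ range n.succ,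
            n.choose k • ((⇑δ)^[n - k + 1] p * (⇑δ)^[k] q)) +
          ∑ k ∈ range n.succ,
            n.choose k • ((⇑δ)^[n - k] p * (⇑δ)^[k + 1] q) := by
        rw [map_sum]
        simp_rw [map_nsmul, Derivation.leibniz, Function.iterate_succ_apply',
          smul_add, sum_add_distrib]
        rw [add_comm]
        congr 1 <;> refine sum_congr rfl fun k hk => ?_ <;>
          simp only [smul_eq_mul, nsmul_eq_mul] <;> ring
      _ = (∑ k ∈ range n.succ,
                n.choose k.succ • ((⇑δ)^[n - k] p * (⇑δ)^[k + 1] q)) +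
              1 • ((⇑δ)^[n + 1] p * (⇑δ)^[0] q) +
            ∑ k ∈ range n.succ, n.choose k • ((⇑δ)^[n - k] p * (⇑δ)^[k + 1] q) :=
        ?_
      _ = ((∑ k ∈ range n.succ, n.choose k • ((⇑δ)^[n - k] p * (⇑δ)^[k + 1] q)) +
              ∑ k ∈ range n.succ,
                n.choose k.succ • ((⇑δ)^[n - k] p * (⇑δ)^[k + 1] q)) +
            1 • ((⇑δ)^[n + 1] p * (⇑δ)^[0] q) := by
        rw [add_comm, add_assoc]
      _ = (∑ i ∈ range n.succ,
              (n + 1).choose (i + 1) • ((⇑δ)^[n + 1 - (i + 1)] p * (⇑δ)^[i + 1] q)) +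
            1 • ((⇑δ)^[n + 1] p * (⇑δ)^[0] q) := by
        simp_rw [Nat.choose_succ_succ, Nat.succ_sub_succ, add_smul, sum_add_distrib]
      _ = ∑ k ∈ range n.succ.succ,
            n.succ.choose k • ((⇑δ)^[n.succ - k] p * (⇑δ)^[k] q) := by
        rw [sum_range_succ' _ n.succ, Nat.choose_zero_right, tsub_zero]
    congr
    refine (sum_range_succ' _ _).trans (congr_arg₂ (· + ·) ?_ ?_)
    · rw [sum_range_succ, Nat.choose_succ_self, zero_smul, add_zero]
      refine sum_congr rfl fun k hk => ?_
      rw [mem_range] at hk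
      congr
      omega
    · rw [Nat.choose_zero_right, tsub_zero]

private lemma iter_zero (n : ℕ) : (⇑δ)^[n] (0 : A) = 0 := by
  induction n with
  | zero => rfl
  | succ n ih => rw [Function.iterate_succ_apply, map_zero, ih]

private lemma iter_stable {a : A} {N M : ℕ} (h : (⇑δ)^[N] a = 0) (hNM : N ≤ M) :
    (⇑δ)^[M] a = 0 := by
  obtain ⟨k, rfl⟩ := Nat.exists_eq_add_of_le hNM
  rw [add_comm, Function.iterate_add_apply, h, iter_zero]

private lemma iter_add (a b : A) (n : ℕ) :
    (⇑δ)^[n] (a + b) = (⇑δ)^[n] a + (⇑δ)^[n] b := by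
  induction n with
  | zero => rfl
  | succ n ih =>
    rw [Function.iterate_succ_apply', ih, map_add]
    simp [Function.iterate_succ_apply']

private lemma LN_add {a b : A} (ha : ∃ N, (⇑δ)^[N] a = 0) (hb : ∃ N, (⇑δ)^[N] b = 0) :
    ∃ N, (⇑δ)^[N] (a + b) = 0 := by
  obtain ⟨Na, ha⟩ := ha
  obtain ⟨Nb, hb⟩ := hb
  exact ⟨max Na Nb, by rw [iter_add, iter_stable δ ha (le_max_left _ _),
    iter_stable δ hb (le_max_right _ _), add_zero]⟩

private lemma LN_mul {a b : A} (ha : ∃ N, (⇑δ)^[N] a = 0) (hb : ∃ N, (⇑δ)^[N] b = 0) :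
    ∃ N, (⇑δ)^[N] (a * b) = 0 := by
  obtain ⟨Na, ha⟩ := ha
  obtain ⟨Nb, hb⟩ := hb
  refine ⟨Na + Nb, ?_⟩
  rw [iter_leibniz]
  refine sum_eq_zero fun k hk => ?_
  rcases le_or_gt Nb k with h | h
  · rw [iter_stable δ hb h, mul_zero, smul_zero]
  · rw [iter_stable δ ha (by omega : Na ≤ Na + Nb - k), zero_mul, smul_zero]

end Aux

/-- Lifting a derivation δ₀ of R to the coordinate ring R[u,v]/(uv−f) of a
suspension via a polynomial q with q(0)=0. -/
theorem stmt_13 {R : Type} [CommRing R] [Algebra ℝ R] (f : R)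
    (δ₀ : Derivation ℝ R R)
    (q qt : Polynomial ℝ) (hq0 : Polynomial.eval 0 q = 0)
    (hqt : q = Polynomial.X * qt)
    (δ₁ : Derivation ℝ (MvPolynomial (Fin 2) R) (MvPolynomial (Fin 2) R))
    (hδ₁C : ∀ r : R, δ₁ (C r) = (Polynomial.aeval (X 1 : MvPolynomial (Fin 2) R) q) * C (δ₀ r))
    (hδ₁v : δ₁ (X 1) = 0)
    (hδ₁u : δ₁ (X 0) = (Polynomial.aeval (X 1 : MvPolynomial (Fin 2) R) qt) * C (δ₀ f)) :
    δ₁ (X 0 * X 1 - C f) = 0 ∧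
    (∀ b ∈ Ideal.span {(X 0 * X 1 - C f : MvPolynomial (Fin 2) R)},
      δ₁ b ∈ Ideal.span {(X 0 * X 1 - C f : MvPolynomial (Fin 2) R)}) ∧
    ((∀ r : R, ∃ N : ℕ, (⇑δ₀)^[N] r = 0) →
      (∀ b : MvPolynomial (Fin 2) R, ∃ N : ℕ, (⇑δ₁)^[N] b = 0) ∧
      (∀ b : MvPolynomial (Fin 2) R, ∃ N : ℕ,
        (⇑δ₁)^[N] b ∈ Ideal.span {(X 0 * X 1 - C f : MvPolynomial (Fin 2) R)})) := by
  have h1 : δ₁ (X 0 * X 1 - C f) = 0 := by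
    rw [map_sub, Derivation.leibniz, hδ₁v, hδ₁u, hδ₁C, hqt, map_mul, Polynomial.aeval_X]
    simp only [smul_eq_mul]
    ring
  refine ⟨h1, ?_, ?_⟩
  · intro b hb
    rw [Ideal.mem_span_singleton'] at hb ⊢
    obtain ⟨c, rfl⟩ := hb
    refine ⟨δ₁ c, ?_⟩
    rw [Derivation.leibniz, h1, smul_zero, zero_add, smul_eq_mul, mul_comm]
  · intro hLN
    -- δ₁ kills polynomials in X 1
    have hP : ∀ p : Polynomial ℝ, δ₁ (Polynomial.aeval (X 1 : MvPolynomial (Fin 2) R) p) = 0 := by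
      intro p
      induction p using Polynomial.induction_on' with
      | add p q hp hq => rw [map_add, map_add, hp, hq, add_zero]
      | monomial n a =>
        rw [Polynomial.aeval_monomial, Derivation.leibniz, Derivation.leibniz_pow, hδ₁v,
          Derivation.map_algebraMap]
        simp
    set Q : MvPolynomial (Fin 2) R := Polynomial.aeval (X 1) q with hQ
    -- key iteration formula
    have key : ∀ n : ℕ, ∀ w : MvPolynomial (Fin 2) R, δ₁ w = 0 → ∀ s : R,
        (⇑δ₁)^[n] (w * C s) = w * Q ^ n * C ((⇑δ₀)^[n] s) := by
      intro n
      induction n with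
      | zero => intro w hw s; simp
      | succ n ih =>
        intro w hw s
        have hstep : δ₁ (w * C s) = (w * Q) * C (δ₀ s) := by
          rw [Derivation.leibniz, hw, smul_zero, add_zero, hδ₁C s, smul_eq_mul]
          ring
        have hwQ : δ₁ (w * Q) = 0 := by
          rw [Derivation.leibniz, hw, smul_zero, add_zero, hQ, hP, smul_zero]
        rw [Function.iterate_succ_apply, hstep, ih _ hwQ,
          Function.iterate_succ_apply, pow_succ]
        ring_nf
    have hLNall : ∀ b : MvPolynomial (Fin 2) R, ∃ N : ℕ, (⇑δ₁)^[N] b = 0 := by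
      intro b
      induction b using MvPolynomial.induction_on with
      | C r =>
        obtain ⟨N, hN⟩ := hLN r
        refine ⟨N, ?_⟩
        have := key N 1 (δ₁.map_one_eq_zero) r
        rw [one_mul] at this
        rw [this, hN, MvPolynomial.C_0, mul_zero]
      | add p q hp hq => exact LN_add δ₁ hp hq
      | mul_X p n hp =>
        refine LN_mul δ₁ hp ?_
        fin_cases n
        · show ∃ N : ℕ, (⇑δ₁)^[N] (X 0 : MvPolynomial (Fin 2) R) = 0
          obtain ⟨N, hN⟩ := hLN f
          refine ⟨N + 1, ?_⟩
          rw [Function.iterate_succ_apply, hδ₁u,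
            key N _ (hP qt) (δ₀ f), ← Function.iterate_succ_apply (⇑δ₀),
            Function.iterate_succ_apply' (⇑δ₀), hN, map_zero, MvPolynomial.C_0, mul_zero]
        · show ∃ N : ℕ, (⇑δ₁)^[N] (X 1 : MvPolynomial (Fin 2) R) = 0
          exact ⟨1, by simpa using hδ₁v⟩
    refine ⟨hLNall, fun b => ?_⟩
    obtain ⟨N, hN⟩ := hLNall b
    exact ⟨N, by rw [hN]; exact Ideal.zero_mem _⟩
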